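/- Let 0 < α < 1 and n ∈ ℕ with n^{1−α} > 2. Then for every x ∈ ℝ, ∫_{{v ∈ ℝ : |nx − v| ≥ n^{1−α}}} Ψ(nx − v) dv < (q + 1/q) / B^{β(n^{1−α} − 1)}. -/
import Mathlib


open MeasureTheory Real Filter

noncomputable def nu (B q β x : ℝ) : ℝ := 1 / (1 + q * B ^ (-(β * x)))

noncomputable def G (B q β x : ℝ) : ℝ := (nu B q β (x + 1) - nu B q β (x - 1)) / 2

noncomputable def Psi (B q β x : ℝ) : ℝ := (G B q β x + G B (1 / q) β x) / 2

noncomputable def modCont (f : ℝ → ℝ) (θ : ℝ) : ℝ :=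
  sSup {d : ℝ | ∃ x y : ℝ, |x - y| ≤ θ ∧ d = |f x - f y|}

noncomputable def supNorm (f : ℝ → ℝ) : ℝ := ⨆ x : ℝ, |f x|

noncomputable def opA (B q β : ℝ) (n : ℕ) (f : ℝ → ℝ) (x : ℝ) : ℝ :=
  ∫ v : ℝ, f (v / n) * Psi B q β (n * x - v)

noncomputable def opAStar (B q β : ℝ) (n : ℕ) (f : ℝ → ℝ) (x : ℝ) : ℝ :=
  (n : ℝ) * ∫ v : ℝ, (∫ h in (v / n)..((v + 1) / n), f h) * Psi B q β (n * x - v)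

noncomputable def opABar (B q β : ℝ) (r : ℕ) (w : ℕ → ℝ) (n : ℕ) (f : ℝ → ℝ) (x : ℝ) : ℝ :=
  ∫ v : ℝ, (∑ s ∈ Finset.Icc 1 r, w s * f (v / n + (s : ℝ) / ((n : ℝ) * (r : ℝ)))) *
    Psi B q β (n * x - v)

open Set

noncomputable def nuE (L q x : ℝ) : ℝ := 1 / (1 + q * Real.exp (-(L * x)))

lemma nuE_denom_pos {L q : ℝ} (hq : 0 < q) (x : ℝ) : 0 < 1 + q * Real.exp (-(L * x)) := by
  positivity

lemma nuE_nonneg {L q : ℝ} (hq : 0 < q) (x : ℝ) : 0 ≤ nuE L q x :=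
  le_of_lt (by unfold nuE; positivity)

lemma nuE_le_one {L q : ℝ} (hq : 0 < q) (x : ℝ) : nuE L q x ≤ 1 := by
  unfold nuE
  rw [div_le_one (nuE_denom_pos hq x)]
  nlinarith [Real.exp_pos (-(L * x))]

lemma nuE_mono {L q : ℝ} (hq : 0 < q) (hL : 0 < L) {x y : ℝ} (h : x ≤ y) :
    nuE L q x ≤ nuE L q y := by
  unfold nuE
  apply one_div_le_one_div_of_le (nuE_denom_pos hq y)
  have : Real.exp (-(L * y)) ≤ Real.exp (-(L * x)) := by
    apply Real.exp_le_exp.2; nlinarith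
  nlinarith

lemma one_sub_nuE_le {L q : ℝ} (hq : 0 < q) (x : ℝ) :
    1 - nuE L q x ≤ q * Real.exp (-(L * x)) := by
  unfold nuE
  have h := nuE_denom_pos (L := L) hq x
  have key : 1 - q * Real.exp (-(L * x)) ≤ 1 / (1 + q * Real.exp (-(L * x))) := by
    rw [le_div_iff₀ h]
    nlinarith [sq_nonneg (q * Real.exp (-(L * x)))]
  linarith

lemma nuE_le_exp {L q : ℝ} (hq : 0 < q) (x : ℝ) :
    nuE L q x ≤ (1 / q) * Real.exp (L * x) := by
  unfold nuE
  have h := nuE_denom_pos (L := L) hq x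
  rw [div_le_iff₀ h]
  have he : Real.exp (L * x) * Real.exp (-(L * x)) = 1 := by
    rw [← Real.exp_add]; simp
  have hq' : (1/q) * Real.exp (L * x) * (q * Real.exp (-(L*x))) = 1 := by
    field_simp
    nlinarith [he]
  have hp : 0 < 1/q * Real.exp (L * x) := by positivity
  nlinarith [hp, hq']

lemma continuous_nuE {L q : ℝ} (hq : 0 < q) : Continuous (nuE L q) := by
  unfold nuE
  exact continuous_const.div (by continuity) (fun x => ne_of_gt (nuE_denom_pos hq x))

lemma nuE_neg {L q : ℝ} (hq : 0 < q) (x : ℝ) :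
    nuE L q (-x) = 1 - nuE L (1/q) x := by
  unfold nuE
  have h1 := nuE_denom_pos (L := L) (one_div_pos.2 hq) x
  have he : Real.exp (L * x) * Real.exp (-(L * x)) = 1 := by
    rw [← Real.exp_add]; simp
  have h2 : 0 < 1 + q * Real.exp (-(L * -x)) := by positivity
  field_simp
  nlinarith [he]

lemma cont_diff_nuE {L q : ℝ} (hq : 0 < q) :
    Continuous (fun t => nuE L q (t + 1) - nuE L q (t - 1)) :=
  ((continuous_nuE hq).comp (continuous_id.add continuous_const)).sub
    ((continuous_nuE hq).comp (continuous_id.sub continuous_const))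

lemma tail_integrable {L q : ℝ} (hL : 0 < L) (hq : 0 < q) (T : ℝ) :
    IntegrableOn (fun t => nuE L q (t + 1) - nuE L q (t - 1)) (Ici T) := by
  have hdom : IntegrableOn (fun t => (q * Real.exp L) * Real.exp (-L * t)) (Ici T) := by
    rw [integrableOn_Ici_iff_integrableOn_Ioi]
    exact (exp_neg_integrableOn_Ioi T hL).const_mul _
  refine hdom.integrable.mono ((cont_diff_nuE hq).aestronglyMeasurable) ?_
  filter_upwards with t
  have h0 : 0 ≤ nuE L q (t + 1) - nuE L q (t - 1) :=
    sub_nonneg.2 (nuE_mono hq hL (by linarith))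
  have h1 : nuE L q (t + 1) - nuE L q (t - 1) ≤ q * Real.exp (-(L * (t - 1))) := by
    have := one_sub_nuE_le (L := L) hq (t - 1)
    have := nuE_le_one (L := L) hq (t + 1)
    linarith
  have he : Real.exp (-(L * (t - 1))) = Real.exp L * Real.exp (-L * t) := by
    rw [← Real.exp_add]; ring_nf
  rw [Real.norm_eq_abs, Real.norm_eq_abs, abs_of_nonneg h0, abs_of_nonneg (by positivity)]
  rw [he] at h1; linarith [h1]

lemma tail_bound {L q : ℝ} (hL : 0 < L) (hq : 0 < q) (T : ℝ) :
    ∫ t in Ici T, (nuE L q (t + 1) - nuE L q (t - 1)) ≤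
      q * (Real.exp (-(L * (T - 1))) + Real.exp (-(L * T))) := by
  have hint := tail_integrable hL hq T
  have hc := continuous_nuE (L := L) hq
  have hII : ∀ a b : ℝ, IntervalIntegrable (nuE L q) volume a b :=
    fun a b => hc.intervalIntegrable a b
  rw [integral_Ici_eq_integral_Ioi]
  refine le_of_tendsto (intervalIntegral_tendsto_integral_Ioi T
    (hint.mono_set Ioi_subset_Ici_self) tendsto_id) ?_
  filter_upwards [eventually_ge_atTop (T + 1)] with M hM
  simp only [id]
  have hsub : ∫ t in T..M, (nuE L q (t + 1) - nuE L q (t - 1)) =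
      (∫ t in T..M, nuE L q (t + 1)) - ∫ t in T..M, nuE L q (t - 1) :=
    intervalIntegral.integral_sub
      ((hc.comp (continuous_id.add continuous_const)).intervalIntegrable _ _)
      ((hc.comp (continuous_id.sub continuous_const)).intervalIntegrable _ _)
  have h1 : (∫ t in T..M, nuE L q (t + 1)) = ∫ s in (T+1)..(M+1), nuE L q s :=
    intervalIntegral.integral_comp_add_right _ 1
  have h2 : (∫ t in T..M, nuE L q (t - 1)) = ∫ s in (T-1)..(M-1), nuE L q s :=
    intervalIntegral.integral_comp_sub_right _ 1
  have a1 : (∫ s in (T-1)..(T+1), nuE L q s) + ∫ s in (T+1)..(M+1), nuE L q s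
      = ∫ s in (T-1)..(M+1), nuE L q s :=
    intervalIntegral.integral_add_adjacent_intervals (hII _ _) (hII _ _)
  have a2 : (∫ s in (T-1)..(M-1), nuE L q s) + ∫ s in (M-1)..(M+1), nuE L q s
      = ∫ s in (T-1)..(M+1), nuE L q s :=
    intervalIntegral.integral_add_adjacent_intervals (hII _ _) (hII _ _)
  have a3 : (∫ s in (T-1)..T, nuE L q s) + ∫ s in T..(T+1), nuE L q s
      = ∫ s in (T-1)..(T+1), nuE L q s :=
    intervalIntegral.integral_add_adjacent_intervals (hII _ _) (hII _ _)
  have b1 : (∫ s in (M-1)..(M+1), nuE L q s) ≤ 2 := by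
    have := intervalIntegral.integral_mono_on (f := nuE L q) (g := fun _ => (1:ℝ))
      (by linarith : M - 1 ≤ M + 1) (hII _ _)
      (intervalIntegrable_const) (fun x _ => nuE_le_one hq x)
    rw [intervalIntegral.integral_const] at this
    simp at this
    linarith
  have b2 : (1 : ℝ) - q * Real.exp (-(L * (T - 1))) ≤ ∫ s in (T-1)..T, nuE L q s := by
    have hmono := intervalIntegral.integral_mono_on
      (f := fun _ => 1 - q * Real.exp (-(L * (T - 1)))) (g := nuE L q)
      (by linarith : T - 1 ≤ T) intervalIntegrable_const (hII _ _)
      (fun s hs => by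
        have hb := one_sub_nuE_le (L := L) hq s
        have hexp : Real.exp (-(L * s)) ≤ Real.exp (-(L * (T - 1))) := by
          apply Real.exp_le_exp.2; nlinarith [hs.1]
        show (1:ℝ) - q * Real.exp (-(L * (T - 1))) ≤ nuE L q s
        nlinarith [Real.exp_pos (-(L * s))])
    rw [intervalIntegral.integral_const] at hmono
    simp at hmono
    linarith
  have b3 : (1 : ℝ) - q * Real.exp (-(L * T)) ≤ ∫ s in T..(T+1), nuE L q s := by
    have hmono := intervalIntegral.integral_mono_on
      (f := fun _ => 1 - q * Real.exp (-(L * T))) (g := nuE L q)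
      (by linarith : T ≤ T + 1) intervalIntegrable_const (hII _ _)
      (fun s hs => by
        have hb := one_sub_nuE_le (L := L) hq s
        have hexp : Real.exp (-(L * s)) ≤ Real.exp (-(L * T)) := by
          apply Real.exp_le_exp.2; nlinarith [hs.1]
        show (1:ℝ) - q * Real.exp (-(L * T)) ≤ nuE L q s
        nlinarith [Real.exp_pos (-(L * s))])
    rw [intervalIntegral.integral_const] at hmono
    simp at hmono
    linarith
  rw [hsub, h1, h2]
  linarith

lemma nu_eq_nuE {B q β : ℝ} (hB : 1 < B) (y : ℝ) :
    nu B q β y = nuE (β * Real.log B) q y := by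
  unfold nu nuE
  rw [Real.rpow_def_of_pos (by linarith),
    show Real.log B * -(β * y) = -(β * Real.log B * y) by ring]

lemma Psi_eq_nuE {B q β : ℝ} (hB : 1 < B) (t : ℝ) :
    Psi B q β t = ((nuE (β * Real.log B) q (t+1) - nuE (β * Real.log B) q (t-1))
      + (nuE (β * Real.log B) (1/q) (t+1) - nuE (β * Real.log B) (1/q) (t-1))) / 4 := by
  simp only [Psi, G, nu_eq_nuE hB]
  ring

lemma Psi_even {B q β : ℝ} (hB : 1 < B) (hq : 0 < q) (t : ℝ) :
    Psi B q β (-t) = Psi B q β t := by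
  have hq' : 0 < 1/q := by positivity
  rw [Psi_eq_nuE hB, Psi_eq_nuE hB]
  set L := β * Real.log B
  have e1 : nuE L q (-t + 1) = 1 - nuE L (1/q) (t - 1) := by
    rw [show (-t + 1 : ℝ) = -(t - 1) by ring, nuE_neg hq]
  have e2 : nuE L q (-t - 1) = 1 - nuE L (1/q) (t + 1) := by
    rw [show (-t - 1 : ℝ) = -(t + 1) by ring, nuE_neg hq]
  have e3 : nuE L (1/q) (-t + 1) = 1 - nuE L q (t - 1) := by
    rw [show (-t + 1 : ℝ) = -(t - 1) by ring, nuE_neg hq', one_div_one_div]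
  have e4 : nuE L (1/q) (-t - 1) = 1 - nuE L q (t + 1) := by
    rw [show (-t - 1 : ℝ) = -(t + 1) by ring, nuE_neg hq', one_div_one_div]
  rw [e1, e2, e3, e4]; ring


/-- tail estimate for `Ψ`. -/
theorem Psi_tail_integral_lt (B q β α : ℝ) (hB : 1 < B) (hq : 0 < q) (hβ : 0 < β)
    (hα0 : 0 < α) (hα1 : α < 1) (n : ℕ) (hn : 2 < (n : ℝ) ^ (1 - α)) (x : ℝ) :
    ∫ v in {v : ℝ | (n : ℝ) ^ (1 - α) ≤ |(n : ℝ) * x - v|}, Psi B q β ((n : ℝ) * x - v) <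
      (q + 1 / q) / B ^ (β * ((n : ℝ) ^ (1 - α) - 1)) := by
  set T : ℝ := (n : ℝ) ^ (1 - α) with hT
  set L : ℝ := β * Real.log B with hLdef
  have hL : 0 < L := mul_pos hβ (Real.log_pos hB)
  have hq' : 0 < 1/q := by positivity
  set c : ℝ := (n : ℝ) * x with hc
  -- change of variables v ↦ c - v
  have hemb : MeasurableEmbedding (fun v : ℝ => c - v) :=
    (MeasurableEquiv.subLeft c).measurableEmbedding
  have hmp : MeasurePreserving (fun v : ℝ => c - v) volume volume :=
    Measure.measurePreserving_sub_left volume c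
  have hcv : (∫ v in {v : ℝ | T ≤ |c - v|}, Psi B q β (c - v))
      = ∫ t in {t : ℝ | T ≤ |t|}, Psi B q β t := by
    rw [show {v : ℝ | T ≤ |c - v|} = (fun v : ℝ => c - v) ⁻¹' {t : ℝ | T ≤ |t|} from rfl]
    exact hmp.setIntegral_preimage_emb hemb (fun t => Psi B q β t) _
  rw [hcv]
  have hset : {t : ℝ | T ≤ |t|} = Iic (-T) ∪ Ici T := by
    ext t
    simp only [mem_setOf_eq, mem_union, mem_Iic, mem_Ici, le_abs]
    constructor
    · rintro (h | h); · right; exact h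
      left; linarith
    · rintro (h | h); · right; linarith
      left; exact h
  rw [hset]
  -- integrability on Ici T
  have hPsiFun : Psi B q β = fun t =>
      ((nuE L q (t+1) - nuE L q (t-1)) + (nuE L (1/q) (t+1) - nuE L (1/q) (t-1))) / 4 :=
    funext (Psi_eq_nuE hB)
  have hIci : IntegrableOn (Psi B q β) (Ici T) := by
    rw [hPsiFun]
    exact ((tail_integrable hL hq T).add (tail_integrable hL hq' T)).div_const 4
  -- reflection: Iic part equals Ici part
  have hnegemb : MeasurableEmbedding (fun v : ℝ => -v) :=
    (MeasurableEquiv.neg ℝ).measurableEmbedding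
  have hnegmp : MeasurePreserving (fun v : ℝ => -v) volume volume :=
    Measure.measurePreserving_neg volume
  have hpre : (fun v : ℝ => -v) ⁻¹' (Iic (-T)) = Ici T := by
    ext t; simp only [mem_preimage, mem_Iic, mem_Ici]; constructor <;> intro h <;> linarith
  have hrefl : (∫ t in Iic (-T), Psi B q β t) = ∫ t in Ici T, Psi B q β t := by
    rw [← hnegmp.setIntegral_preimage_emb hnegemb (fun t => Psi B q β t) (Iic (-T)), hpre]
    congr 1
    funext t
    exact Psi_even hB hq t
  have hIic : IntegrableOn (Psi B q β) (Iic (-T)) := by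
    rw [← (hnegmp.integrableOn_comp_preimage hnegemb (f := Psi B q β) (s := Iic (-T))), hpre]
    have : (Psi B q β ∘ fun v : ℝ => -v) = Psi B q β := funext fun t => Psi_even hB hq t
    rw [this]
    exact hIci
  rw [setIntegral_union (Iic_disjoint_Ici.2 (by linarith : ¬ T ≤ -T)) measurableSet_Ici
    hIic hIci, hrefl]
  -- compute / bound ∫ in Ici T
  have hsplit : (∫ t in Ici T, Psi B q β t)
      = ((∫ t in Ici T, (nuE L q (t+1) - nuE L q (t-1)))
        + ∫ t in Ici T, (nuE L (1/q) (t+1) - nuE L (1/q) (t-1))) / 4 := by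
    rw [hPsiFun, integral_div, integral_add (tail_integrable hL hq T) (tail_integrable hL hq' T)]
  have b1 := tail_bound hL hq T
  have b2 := tail_bound hL hq' T
  -- RHS rewriting
  have hrhs : (q + 1 / q) / B ^ (β * (T - 1)) = (q + 1/q) * Real.exp (-(L * (T - 1))) := by
    rw [Real.rpow_def_of_pos (by linarith : (0:ℝ) < B), Real.exp_neg,
      show Real.log B * (β * (T - 1)) = L * (T - 1) by rw [hLdef]; ring, div_eq_mul_inv]
  rw [hrhs, hsplit]
  have hE : Real.exp (-(L * T)) < Real.exp (-(L * (T - 1))) := by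
    apply Real.exp_lt_exp.2; nlinarith
  have hqpos : 0 < q + 1/q := by positivity
  nlinarith [Real.exp_pos (-(L * (T - 1))), Real.exp_pos (-(L * T))]
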